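/- Let m ∈ ℝ and let (r,θ,φ) satisfy r > 0. Define α = (1 + m/(2r))² = γ²/(4r²) and β = (2 − m/r)/(2 + m/r) = δ/γ, where γ = 2r + m ≠ 0 and δ = 2r − m. Let B be the 4×4 Jacobian matrix of the map (r,θ,φ,τ) ↦ (r sinθ cosφ, r sinθ sinφ, r cosθ, τ), let f = diag(α, α, α, β), let η = diag(−1,−1,−1,1), and let B̂ = f·B. Then the congruent pullback metric is the isotropic Schwarzschild metric in spherical coordinates: B̂ᵀ·η·B̂ = diag( −(γ²/(4r²))², −(γ²/(4r))², −(γ²/(4r))²·sin²θ, (δ/γ)² ). -/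
import Mathlib


open Matrix Real

/-- Embedding the isotropic Schwarzschild metric in a basis frame: perturbing the
spherical-to-Cartesian Jacobian frame `B` by `f = diag(α,α,α,β)` yields a frame whose
congruent pullback metric is the isotropic Schwarzschild metric in spherical
coordinates. -/
lemma diag4 (a b c d : ℝ) :
    Matrix.diagonal ![a, b, c, d] = !![a,0,0,0; 0,b,0,0; 0,0,c,0; 0,0,0,d] := by
  ext i j
  fin_cases i <;> fin_cases j <;>
    simp [Matrix.diagonal, Matrix.vecHead, Matrix.vecTail]

lemma trans4 (a b c d e f g h i j k l n o p q : ℝ) :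
    (!![a,b,c,d; e,f,g,h; i,j,k,l; n,o,p,q])ᵀ =
      !![a,e,i,n; b,f,j,o; c,g,k,p; d,h,l,q] := by
  ext x y
  fin_cases x <;> fin_cases y <;>
    simp [Matrix.vecHead, Matrix.vecTail]

lemma mul4 (a b c d e f g h i j k l n o p q
    a' b' c' d' e' f' g' h' i' j' k' l' n' o' p' q' : ℝ) :
    !![a,b,c,d; e,f,g,h; i,j,k,l; n,o,p,q] *
      !![a',b',c',d'; e',f',g',h'; i',j',k',l'; n',o',p',q'] =
      !![a*a'+b*e'+c*i'+d*n', a*b'+b*f'+c*j'+d*o', a*c'+b*g'+c*k'+d*p', a*d'+b*h'+c*l'+d*q';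
         e*a'+f*e'+g*i'+h*n', e*b'+f*f'+g*j'+h*o', e*c'+f*g'+g*k'+h*p', e*d'+f*h'+g*l'+h*q';
         i*a'+j*e'+k*i'+l*n', i*b'+j*f'+k*j'+l*o', i*c'+j*g'+k*k'+l*p', i*d'+j*h'+k*l'+l*q';
         n*a'+o*e'+p*i'+q*n', n*b'+o*f'+p*j'+q*o', n*c'+o*g'+p*k'+q*p', n*d'+o*h'+p*l'+q*q'] := by
  ext x y
  fin_cases x <;> fin_cases y <;>
    simp [Matrix.mul_apply, Fin.sum_univ_four, Matrix.vecHead, Matrix.vecTail]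

set_option maxHeartbeats 1000000 in
theorem isotropic_schwarzschild_congruent_metric
    (m r θ φ : ℝ) (hr : 0 < r) (hγ : 2 * r + m ≠ 0) :
    (1 + m / (2 * r)) ^ 2 = (2 * r + m) ^ 2 / (4 * r ^ 2) ∧
    (2 - m / r) / (2 + m / r) = (2 * r - m) / (2 * r + m) ∧
    ((Matrix.diagonal
        ![(2 * r + m) ^ 2 / (4 * r ^ 2), (2 * r + m) ^ 2 / (4 * r ^ 2),
          (2 * r + m) ^ 2 / (4 * r ^ 2), (2 * r - m) / (2 * r + m)] *
      !![sin θ * cos φ, r * cos θ * cos φ, -(r * sin θ * sin φ), 0;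
         sin θ * sin φ, r * cos θ * sin φ, r * sin θ * cos φ, 0;
         cos θ, -(r * sin θ), 0, 0;
         0, 0, 0, 1])ᵀ *
      Matrix.diagonal ![(-1 : ℝ), -1, -1, 1] *
      (Matrix.diagonal
        ![(2 * r + m) ^ 2 / (4 * r ^ 2), (2 * r + m) ^ 2 / (4 * r ^ 2),
          (2 * r + m) ^ 2 / (4 * r ^ 2), (2 * r - m) / (2 * r + m)] *
      !![sin θ * cos φ, r * cos θ * cos φ, -(r * sin θ * sin φ), 0;
         sin θ * sin φ, r * cos θ * sin φ, r * sin θ * cos φ, 0;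
         cos θ, -(r * sin θ), 0, 0;
         0, 0, 0, 1]) =
      Matrix.diagonal
        ![-((2 * r + m) ^ 2 / (4 * r ^ 2)) ^ 2, -((2 * r + m) ^ 2 / (4 * r)) ^ 2,
          -(((2 * r + m) ^ 2 / (4 * r)) ^ 2 * sin θ ^ 2),
          ((2 * r - m) / (2 * r + m)) ^ 2]) := by
  have hr' : r ≠ 0 := hr.ne'
  have hγ' : r * 2 + m ≠ 0 := by rw [mul_comm]; exact hγ
  have hs := sin_sq_add_cos_sq θ
  have hp := sin_sq_add_cos_sq φ
  have hcθ : cos θ ^ 2 = 1 - sin θ ^ 2 := by nlinarith [sin_sq_add_cos_sq θ]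
  have hcφ : cos φ ^ 2 = 1 - sin φ ^ 2 := by nlinarith [sin_sq_add_cos_sq φ]
  have h2 : (2:ℝ) + m / r ≠ 0 := by
    rw [show (2:ℝ) + m / r = (2 * r + m) / r by field_simp]
    exact div_ne_zero hγ hr'
  refine ⟨by field_simp; try ring, by rw [div_eq_div_iff h2 hγ]; field_simp; try ring, ?_⟩
  simp only [diag4]
  rw [mul4, trans4, mul4, mul4]
  ext i j
  fin_cases i <;> fin_cases j <;>
    simp [Matrix.vecHead, Matrix.vecTail] <;> field_simp <;> ring_nf <;>
      simp only [hcθ, hcφ] <;> ring_nf
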